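/- For weak compositions of length 2, the identity M_{(0,2)} = L_{(0,2)} + L_{(2,0)} − L_{(1,1)} holds, where M is the monomial slide polynomial and L the fundamental particle polynomial. In particular, the monomial slide basis does not expand positively in the fundamental particle basis. -/

import Mathlib

open MvPolynomial
open scoped Classical

noncomputable section

/-- Partial sum of the first `k` entries of a weak composition. -/
def psum {n : ℕ} (a : Fin n → ℕ) (k : ℕ) : ℕ :=
  ∑ i ∈ Finset.univ.filter (fun i : Fin n => (i : ℕ) < k), a i

/-- Dominance order: `Dom a b` means `b ≥ a`, i.e. every partial sum of `b`
is at least the corresponding partial sum of `a`. -/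
def Dom {n : ℕ} (a b : Fin n → ℕ) : Prop := ∀ k : ℕ, psum a k ≤ psum b k

/-- `flat a`: the list of nonzero entries of `a`, in order. -/
def flat {n : ℕ} (a : Fin n → ℕ) : List ℕ := (List.ofFn a).filter (· ≠ 0)

/-- The monomial `x^b`. -/
def mono {n : ℕ} (b : Fin n → ℕ) : MvPolynomial (Fin n) ℤ := ∏ i, X i ^ b i

/-- Finite set of weak compositions of length `n` with all entries `≤ N`. -/
def box (n N : ℕ) : Finset (Fin n → ℕ) := Fintype.piFinset fun _ => Finset.range (N + 1)

/-- A single slide move relative to the base composition `a`: a local move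
`(…,0,k,…) → (…,i,j,…)` with `i + j = k`.  When `fixed = true` we additionally
require `j > 0` whenever `k` occupies a position that is nonzero in `a`. -/
def SlideMove {n : ℕ} (a : Fin n → ℕ) (fixed : Bool) (b c : Fin n → ℕ) : Prop :=
  ∃ (p : ℕ) (hp : p + 1 < n) (i j : ℕ),
    b ⟨p, Nat.lt_of_succ_lt hp⟩ = 0 ∧
    i + j = b ⟨p + 1, hp⟩ ∧
    (fixed = true → a ⟨p + 1, hp⟩ ≠ 0 → 0 < j) ∧
    c = Function.update (Function.update b ⟨p, Nat.lt_of_succ_lt hp⟩ i) ⟨p + 1, hp⟩ j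

/-- `b` is a slide of `a`. -/
def Slides {n : ℕ} (a b : Fin n → ℕ) : Prop :=
  Relation.ReflTransGen (SlideMove a false) a b

/-- `b` is a fixed slide of `a`. -/
def FixSlides {n : ℕ} (a b : Fin n → ℕ) : Prop :=
  Relation.ReflTransGen (SlideMove a true) a b

/-- The monomial slide polynomial `M_a`. -/
def Mslide {n : ℕ} (a : Fin n → ℕ) : MvPolynomial (Fin n) ℤ :=
  ∑ b ∈ (box n (∑ i, a i)).filter (fun b => Dom a b ∧ flat b = flat a), mono b

/-- The fundamental slide polynomial `F_a`, as the generating function of slides. -/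
def Fslide {n : ℕ} (a : Fin n → ℕ) : MvPolynomial (Fin n) ℤ :=
  ∑ b ∈ (box n (∑ i, a i)).filter (fun b => Slides a b), mono b

/-- The fundamental particle polynomial `L_a`, the generating function of fixed slides. -/
def Lpart {n : ℕ} (a : Fin n → ℕ) : MvPolynomial (Fin n) ℤ :=
  ∑ b ∈ (box n (∑ i, a i)).filter (fun b => FixSlides a b), mono b

/-- A left swap: exchange entries `b i ≤ b j` with `i < j`. -/
def LSwap {n : ℕ} (b c : Fin n → ℕ) : Prop :=
  ∃ i j : Fin n, i < j ∧ b i ≤ b j ∧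
    c = Function.update (Function.update b i (b j)) j (b i)


lemma pair_eta (b : Fin 2 → ℕ) : b = ![b 0, b 1] := by
  funext i; fin_cases i <;> rfl

lemma psum2 (v : Fin 2 → ℕ) (k : ℕ) :
    psum v k = if k = 0 then 0 else if k = 1 then v 0 else v 0 + v 1 := by
  unfold _root_.psum
  rcases k with _ | _ | k
  · simp
  · have h : (Finset.univ.filter (fun i : Fin 2 => (i : ℕ) < 1)) = {0} := by decide
    rw [h, Finset.sum_singleton]
    rfl
  · have h : (Finset.univ.filter (fun i : Fin 2 => (i : ℕ) < k + 2)) = Finset.univ := by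
      ext i; simp; omega
    rw [h]; simp [Fin.sum_univ_two]

lemma slideMove2 (a : Fin 2 → ℕ) (f : Bool) (b c : Fin 2 → ℕ) :
    SlideMove a f b c ↔
      b 0 = 0 ∧ ∃ i j : ℕ, i + j = b 1 ∧ (f = true → a 1 ≠ 0 → 0 < j) ∧ c = ![i, j] := by
  constructor
  · rintro ⟨p, hp, i, j, h0, hij, hj, rfl⟩
    have hp0 : p = 0 := by omega
    subst hp0
    refine ⟨h0, i, j, hij, hj, ?_⟩
    funext t; fin_cases t <;> simp [Function.update]
  · rintro ⟨h0, i, j, hij, hj, rfl⟩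
    refine ⟨0, by omega, i, j, h0, hij, hj, ?_⟩
    funext t; fin_cases t <;> simp [Function.update]

lemma fixslides_sum {a b : Fin 2 → ℕ} (h : FixSlides a b) : b 0 + b 1 = a 0 + a 1 := by
  induction h with
  | refl => rfl
  | tail _ h2 ih =>
      obtain ⟨h0, i, j, hij, _, rfl⟩ := (slideMove2 _ _ _ _).mp h2
      simp only [Matrix.cons_val_zero, Matrix.cons_val_one, Matrix.head_cons]
      omega

lemma fix_stuck (a : Fin 2 → ℕ) (h : a 0 ≠ 0) (b : Fin 2 → ℕ) :
    FixSlides a b ↔ b = a := by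
  constructor
  · intro hf
    rcases (Relation.ReflTransGen.cases_head hf) with rfl | ⟨c, hc, _⟩
    · rfl
    · obtain ⟨h0, _⟩ := (slideMove2 _ _ _ _).mp hc
      exact absurd h0 h
  · rintro rfl; exact Relation.ReflTransGen.refl

lemma fix02 (b : Fin 2 → ℕ) : FixSlides ![0, 2] b ↔ b = ![0, 2] ∨ b = ![1, 1] := by
  constructor
  · intro h
    induction h with
    | refl => left; rfl
    | tail _ h2 ih =>
        obtain ⟨h0, i, j, hij, hj, rfl⟩ := (slideMove2 _ _ _ _).mp h2
        rcases ih with rfl | rfl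
        · have hj' : 0 < j := hj rfl (by decide)
          simp only [Matrix.cons_val_one, Matrix.head_cons] at hij
          replace hij : i + j = 2 := by simpa using hij
          have hc : (i = 0 ∧ j = 2) ∨ (i = 1 ∧ j = 1) := by omega
          rcases hc with ⟨rfl, rfl⟩ | ⟨rfl, rfl⟩
          · left; rfl
          · right; rfl
        · exact absurd h0 (by decide)
  · rintro (rfl | rfl)
    · exact Relation.ReflTransGen.refl
    · exact Relation.ReflTransGen.single
        ((slideMove2 _ _ _ _).mpr ⟨rfl, 1, 1, rfl, fun _ _ => one_pos, rfl⟩)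

lemma flat_pair (x y : ℕ) :
    flat ![x, y] = (if x = 0 then [] else [x]) ++ (if y = 0 then [] else [y]) := by
  unfold flat
  by_cases hx : x = 0 <;> by_cases hy : y = 0 <;>
    simp [List.ofFn_succ, List.filter, hx, hy]

lemma Mset : (box 2 (∑ i, (![0, 2] : Fin 2 → ℕ) i)).filter
    (fun b => Dom ![0, 2] b ∧ flat b = flat ![0, 2]) = {![0, 2], ![2, 0]} := by
  have hsum : (∑ i, (![0, 2] : Fin 2 → ℕ) i) = 2 := by simp [Fin.sum_univ_two]
  rw [hsum]
  ext b
  simp only [Finset.mem_filter, Finset.mem_insert, Finset.mem_singleton]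
  constructor
  · rintro ⟨hbox, hdom, hflat⟩
    have h02 : flat ![(0:ℕ), 2] = [2] := by decide
    rw [h02, pair_eta b, flat_pair] at hflat
    by_cases h0 : b 0 = 0
    · by_cases h1 : b 1 = 0
      · simp [h0, h1] at hflat
      · simp [h0, h1] at hflat
        left; rw [pair_eta b, h0, hflat]
    · by_cases h1 : b 1 = 0
      · simp [h0, h1] at hflat
        right; rw [pair_eta b, hflat, h1]
      · simp [h0, h1] at hflat
  · rintro (rfl | rfl)
    · exact ⟨by decide, fun k => le_refl _, rfl⟩
    · refine ⟨by decide, fun k => ?_, by decide⟩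
      rw [psum2, psum2]; split_ifs <;> simp

lemma Mcomp : Mslide ![0, 2] = mono ![0, 2] + mono ![2, 0] := by
  rw [Mslide, Mset, Finset.sum_insert (by decide), Finset.sum_singleton]

lemma Lset02 : (box 2 (∑ i, (![0, 2] : Fin 2 → ℕ) i)).filter
    (fun b => FixSlides ![0, 2] b) = {![0, 2], ![1, 1]} := by
  have hsum : (∑ i, (![0, 2] : Fin 2 → ℕ) i) = 2 := by simp [Fin.sum_univ_two]
  rw [hsum]
  ext b
  simp only [Finset.mem_filter, Finset.mem_insert, Finset.mem_singleton, fix02]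
  constructor
  · rintro ⟨_, h⟩; exact h
  · rintro (rfl | rfl)
    · exact ⟨by decide, Or.inl rfl⟩
    · exact ⟨by decide, Or.inr rfl⟩

lemma Lcomp02 : Lpart ![0, 2] = mono ![0, 2] + mono ![1, 1] := by
  rw [Lpart, Lset02, Finset.sum_insert (by decide), Finset.sum_singleton]

lemma Lset_stuck (a : Fin 2 → ℕ) (h : a 0 ≠ 0) :
    (box 2 (∑ i, a i)).filter (fun b => FixSlides a b) = {a} := by
  ext b
  simp only [Finset.mem_filter, Finset.mem_singleton, fix_stuck a h]
  constructor
  · rintro ⟨_, h⟩; exact h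
  · rintro rfl
    refine ⟨?_, rfl⟩
    simp only [box, Fintype.mem_piFinset, Finset.mem_range]
    intro i
    exact Nat.lt_succ_of_le (Finset.single_le_sum (fun _ _ => Nat.zero_le _) (Finset.mem_univ i))

lemma Lcomp20 : Lpart ![2, 0] = mono ![2, 0] := by
  rw [Lpart, Lset_stuck _ (by decide), Finset.sum_singleton]

lemma Lcomp11 : Lpart ![1, 1] = mono ![1, 1] := by
  rw [Lpart, Lset_stuck _ (by decide), Finset.sum_singleton]

lemma mono_eq (b : Fin 2 → ℕ) :
    mono b = monomial (Finsupp.equivFunOnFinite.symm b) 1 := by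
  rw [mono, ← prod_X_pow_eq_monomial]
  symm
  apply Finset.prod_subset (Finset.subset_univ _)
  intro i _ hi
  have h : (Finsupp.equivFunOnFinite.symm b) i = 0 := by
    simpa [Finsupp.mem_support_iff] using hi
  have h' : b i = 0 := h
  simp [h']

lemma coeff_mono (m b : Fin 2 → ℕ) :
    coeff (Finsupp.equivFunOnFinite.symm m) (mono b) = if b = m then 1 else 0 := by
  rw [mono_eq, coeff_monomial]
  simp only [Equiv.apply_eq_iff_eq]

lemma coeff_Lpart (m b : Fin 2 → ℕ) :
    coeff (Finsupp.equivFunOnFinite.symm m) (Lpart b) =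
      if m ∈ (box 2 (∑ i, b i)).filter (fun cc => FixSlides b cc) then 1 else 0 := by
  rw [Lpart, coeff_sum]
  simp only [coeff_mono]
  exact Finset.sum_ite_eq' _ m fun _ => (1 : ℤ)


lemma mem11 (b : Fin 2 → ℕ) :
    ![1, 1] ∈ (box 2 (∑ i, b i)).filter (fun cc => FixSlides b cc) ↔
      b = ![1, 1] ∨ b = ![0, 2] := by
  simp only [Finset.mem_filter]
  constructor
  · rintro ⟨_, hf⟩
    have hs := fixslides_sum hf
    simp only [Matrix.cons_val_zero, Matrix.cons_val_one, Matrix.head_cons] at hs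
    have hc : (b 0 = 1 ∧ b 1 = 1) ∨ (b 0 = 0 ∧ b 1 = 2) ∨ (b 0 = 2 ∧ b 1 = 0) := by omega
    rcases hc with ⟨h0, h1⟩ | ⟨h0, h1⟩ | ⟨h0, h1⟩
    · left; rw [pair_eta b, h0, h1]
    · right; rw [pair_eta b, h0, h1]
    · exfalso
      have hb : b = ![2, 0] := by rw [pair_eta b, h0, h1]
      rw [hb] at hf
      exact absurd ((fix_stuck _ (by decide) _).mp hf) (by decide)
  · rintro (rfl | rfl)
    · refine ⟨?_, Relation.ReflTransGen.refl⟩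
      rw [show (∑ i, (![1, 1] : Fin 2 → ℕ) i) = 2 from by simp [Fin.sum_univ_two]]
      decide
    · refine ⟨?_, (fix02 _).mpr (Or.inr rfl)⟩
      rw [show (∑ i, (![0, 2] : Fin 2 → ℕ) i) = 2 from by simp [Fin.sum_univ_two]]
      decide

lemma mem02 (b : Fin 2 → ℕ) :
    ![0, 2] ∈ (box 2 (∑ i, b i)).filter (fun cc => FixSlides b cc) ↔ b = ![0, 2] := by
  simp only [Finset.mem_filter]
  constructor
  · rintro ⟨_, hf⟩
    have hs := fixslides_sum hf
    simp only [Matrix.cons_val_zero, Matrix.cons_val_one, Matrix.head_cons] at hs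
    have hc : (b 0 = 1 ∧ b 1 = 1) ∨ (b 0 = 0 ∧ b 1 = 2) ∨ (b 0 = 2 ∧ b 1 = 0) := by omega
    rcases hc with ⟨h0, h1⟩ | ⟨h0, h1⟩ | ⟨h0, h1⟩
    · exfalso
      have hb : b = ![1, 1] := by rw [pair_eta b, h0, h1]
      rw [hb] at hf
      exact absurd ((fix_stuck _ (by decide) _).mp hf) (by decide)
    · rw [pair_eta b, h0, h1]
    · exfalso
      have hb : b = ![2, 0] := by rw [pair_eta b, h0, h1]
      rw [hb] at hf
      exact absurd ((fix_stuck _ (by decide) _).mp hf) (by decide)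
  · rintro rfl
    refine ⟨?_, Relation.ReflTransGen.refl⟩
    rw [show (∑ i, (![0, 2] : Fin 2 → ℕ) i) = 2 from by simp [Fin.sum_univ_two]]
    decide

lemma coeffL11 (b : Fin 2 → ℕ) :
    coeff (Finsupp.equivFunOnFinite.symm ![1, 1]) (Lpart b) =
      (if b = ![1, 1] then 1 else 0) + (if b = ![0, 2] then (1 : ℤ) else 0) := by
  rw [coeff_Lpart]
  simp only [mem11]
  by_cases h1 : b = ![1, 1]
  · subst h1
    simp [show ¬((![1, 1] : Fin 2 → ℕ) = ![0, 2]) from by decide]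
  · by_cases h2 : b = ![0, 2]
    · subst h2
      simp [show ¬((![0, 2] : Fin 2 → ℕ) = ![1, 1]) from by decide]
    · simp [h1, h2]

lemma coeffL02 (b : Fin 2 → ℕ) :
    coeff (Finsupp.equivFunOnFinite.symm ![0, 2]) (Lpart b) =
      if b = ![0, 2] then (1 : ℤ) else 0 := by
  rw [coeff_Lpart]
  simp only [mem02]

lemma sum_ind (c : (Fin 2 → ℕ) →₀ ℤ) (x : Fin 2 → ℕ) :
    (∑ b ∈ c.support, c b * (if b = x then 1 else 0)) = c x := by
  simp only [mul_ite, mul_one, mul_zero]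
  rw [Finset.sum_ite_eq' c.support x c]
  split
  · rfl
  · exact (Finsupp.notMem_support_iff.mp (by assumption)).symm

/-- in `ℤ[x₁,x₂]` we have `M_{(0,2)} = L_{(0,2)} + L_{(2,0)} - L_{(1,1)}`;
in particular, any expansion of `M_{(0,2)}` in the fundamental particle basis has a
negative coefficient. -/
theorem Mslide_not_particle_positive :
    Mslide ![0, 2] = Lpart ![0, 2] + Lpart ![2, 0] - Lpart ![1, 1] ∧
    ∀ c : (Fin 2 → ℕ) →₀ ℤ,
      Mslide ![0, 2] = ∑ b ∈ c.support, c b • Lpart b → ∃ b, c b < 0 := by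
  constructor
  · rw [Mcomp, Lcomp02, Lcomp20, Lcomp11]; ring
  · intro c heq
    have key : ∀ m : Fin 2 → ℕ,
        coeff (Finsupp.equivFunOnFinite.symm m) (Mslide ![0, 2]) =
          ∑ b ∈ c.support, c b * coeff (Finsupp.equivFunOnFinite.symm m) (Lpart b) := by
      intro m
      rw [heq, coeff_sum]
      simp only [coeff_smul, smul_eq_mul]
    have h02 := key ![0, 2]
    rw [Mcomp, coeff_add, coeff_mono, coeff_mono] at h02
    simp only [coeffL02, sum_ind] at h02
    rw [if_pos trivial, if_neg (show ¬((![2,0] : Fin 2 → ℕ) = ![0,2]) from by decide)] at h02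
    have h11 := key ![1, 1]
    rw [Mcomp, coeff_add, coeff_mono, coeff_mono] at h11
    simp only [coeffL11, mul_add, Finset.sum_add_distrib, sum_ind] at h11
    rw [if_neg (show ¬((![0,2] : Fin 2 → ℕ) = ![1,1]) from by decide),
        if_neg (show ¬((![2,0] : Fin 2 → ℕ) = ![1,1]) from by decide)] at h11
    exact ⟨![1, 1], by omega⟩


end
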